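/- Assume (ε/β)(p+1) ln(N−4) < 1 and ε < N^{−1}. Then there exist N₀ and C depending only on p and β (not on ε) such that for all N ≥ N₀ the eXp mesh is well defined, i.e. 0 = x₀ < x₁ < ⋯ < x_N = 1, and every mesh width satisfies h_j = x_j − x_{j−1} ≤ C N^{−1} for j = 1, …, N. -/

import Mathlib

/-- The constant `C_{p,ε} = 1 − exp(−β/((p+1)ε))`. -/
noncomputable def Cpe (p : ℕ) (β ε : ℝ) : ℝ :=
  1 - Real.exp (-(β / (((p:ℝ) + 1) * ε)))

/-- The mesh generating function `φ(t) = −ln(1 − 4 C_{p,ε} t)`. -/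
noncomputable def phiFun (c : ℝ) : ℝ → ℝ := fun t => -Real.log (1 - 4 * c * t)

/-- The graded nodes `x_j = (ε/β)(p+1)φ(j/N)`. -/
noncomputable def gradedNode (p N : ℕ) (β ε : ℝ) (j : ℕ) : ℝ :=
  (ε / β) * ((p:ℝ) + 1) * phiFun (Cpe p β ε) ((j:ℝ) / (N:ℝ))

/-- The nodes of the exponentially graded (eXp) mesh on `[0,1]`. -/
noncomputable def expNode (p N : ℕ) (β ε : ℝ) (j : ℕ) : ℝ :=
  if j ≤ N / 4 - 1 then gradedNode p N β ε j
  else if j ≤ 3 * N / 4 then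
    gradedNode p N β ε (N / 4 - 1) +
      ((1 - 2 * gradedNode p N β ε (N / 4 - 1)) / ((N:ℝ) / 2 + 2)) *
        ((j:ℝ) - ((N:ℝ) / 4 - 1))
  else 1 - (ε / β) * ((p:ℝ) + 1) * phiFun (Cpe p β ε) (((N - j : ℕ):ℝ) / (N:ℝ))

lemma phi_step (c M k : ℝ) (hc0 : 0 < c) (hc1 : c ≤ 1) (hM : 1 ≤ M)
    (hk0 : 0 ≤ k) (hk : k + 1 ≤ M - 1) :
    0 < phiFun c ((k+1)/(4*M)) - phiFun c (k/(4*M)) ∧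
    phiFun c ((k+1)/(4*M)) - phiFun c (k/(4*M)) ≤ 1 := by
  have hM0 : (0:ℝ) < M := by linarith
  have hcM : 0 < c / M := div_pos hc0 hM0
  set u : ℝ := 1 - c * k / M with hu
  set v : ℝ := 1 - c * (k+1) / M with hv
  have huv : u - v = c / M := by rw [hu, hv]; ring
  have hvlb : c / M ≤ v := by
    have h1 : c * (k+1) / M ≤ c * (M-1) / M := by
      gcongr
    have h2 : c * (M-1) / M = c - c / M := by field_simp
    rw [hv]; nlinarith
  have hv0 : 0 < v := lt_of_lt_of_le hcM hvlb
  have hvu : v < u := sub_pos.mp (by rw [huv]; exact hcM)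
  have hu0 : 0 < u := hv0.trans hvu
  have e1 : phiFun c (k/(4*M)) = -Real.log u := by
    simp only [phiFun, hu]
    congr 2
    field_simp
  have e2 : phiFun c ((k+1)/(4*M)) = -Real.log v := by
    simp only [phiFun, hv]
    congr 2
    field_simp
  rw [e1, e2]
  have hlog : Real.log v < Real.log u := Real.log_lt_log hv0 hvu
  constructor
  · linarith
  · have h3 : Real.log u - Real.log v = Real.log (u / v) :=
      (Real.log_div hu0.ne' hv0.ne').symm
    have h4 : Real.log (u / v) ≤ u / v - 1 :=
      Real.log_le_sub_one_of_pos (div_pos hu0 hv0)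
    have h5 : u / v - 1 = (u - v) / v := by field_simp
    have h6 : (u - v) / v ≤ 1 := by
      rw [huv]
      exact (div_le_one hv0).mpr hvlb
    linarith

set_option maxHeartbeats 1000000 in
/-- under `(ε/β)(p+1)ln(N−4) < 1` and `ε < N⁻¹`, for all `N ≥ N₀`
(`N₀`, `C` depending only on `p`, `β`) the eXp mesh is well defined,
`0 = x₀ < x₁ < ⋯ < x_N = 1`, and every mesh width satisfies `h_j ≤ C N⁻¹`. -/
theorem stmt_4 (p : ℕ) (hp : 3 ≤ p) (β : ℝ) (hβ : 0 < β) :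
    ∃ (N₀ : ℕ) (C : ℝ), 0 < C ∧
      ∀ (ε : ℝ) (N : ℕ), ε ∈ Set.Ioc (0:ℝ) 1 → N₀ ≤ N → 8 ≤ N → 4 ∣ N →
        (ε / β) * ((p:ℝ) + 1) * Real.log ((N:ℝ) - 4) < 1 → ε < (N:ℝ)⁻¹ →
        (expNode p N β ε 0 = 0 ∧
          (∀ j < N, expNode p N β ε j < expNode p N β ε (j + 1)) ∧
          expNode p N β ε N = 1) ∧
        ∀ j : ℕ, 1 ≤ j → j ≤ N →
          expNode p N β ε j - expNode p N β ε (j - 1) ≤ C * (N:ℝ)⁻¹ := by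
  set c₀ : ℝ := 1 - Real.exp (-(β / ((p:ℝ)+1))) with hc₀def
  have hp1 : (0:ℝ) < (p:ℝ) + 1 := by positivity
  have hc₀0 : 0 < c₀ := by
    rw [hc₀def, sub_pos]
    exact Real.exp_lt_one_iff.mpr (neg_lt_zero.mpr (by positivity))
  have hc₀1 : c₀ < 1 := by
    rw [hc₀def]
    have := Real.exp_pos (-(β / ((p:ℝ)+1)))
    linarith
  set L : ℝ := -Real.log c₀ with hLdef
  have hL0 : 0 < L := by
    rw [hLdef, neg_pos]
    exact Real.log_neg hc₀0 hc₀1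
  set K : ℝ := ((p:ℝ)+1) * (2+L) / (4*β) with hKdef
  have hK0 : 0 < K := by positivity
  refine ⟨4 * (⌈16*K^2⌉₊ + 1), ((p:ℝ)+1)/β + 2, by positivity, ?_⟩
  rintro ε N ⟨hε0, hε1⟩ hNN₀ hN8 ⟨m, rfl⟩ hlog hεN
  clear hlog
  have hm2 : 2 ≤ m := by omega
  set M : ℝ := (m:ℝ) with hMdef
  have hM2 : (2:ℝ) ≤ M := by rw [hMdef]; exact_mod_cast hm2
  have hM1 : (1:ℝ) ≤ M := by linarith
  have hM0 : (0:ℝ) < M := by linarith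
  have hNcast : ((4*m:ℕ):ℝ) = 4*M := by push_cast [hMdef]; ring
  set c : ℝ := Cpe p β ε with hcdef
  have hexp : Real.exp (-(β / (((p:ℝ) + 1) * ε))) < 1 :=
    Real.exp_lt_one_iff.mpr (neg_lt_zero.mpr (by positivity))
  have hc0 : 0 < c := by rw [hcdef, Cpe]; linarith
  have hc1 : c < 1 := by
    rw [hcdef, Cpe]
    have := Real.exp_pos (-(β / (((p:ℝ) + 1) * ε)))
    linarith
  have hcl : c₀ ≤ c := by
    rw [hcdef, Cpe, hc₀def]
    have h1 : β / ((p:ℝ)+1) ≤ β / (((p:ℝ)+1) * ε) := by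
      gcongr
      nlinarith
    have := Real.exp_le_exp.mpr (neg_le_neg h1)
    linarith
  set a : ℝ := ε / β * ((p:ℝ) + 1) with hadef
  have ha0 : 0 < a := by positivity
  have haU : a ≤ ((p:ℝ)+1)/β * (4*M)⁻¹ := by
    rw [hNcast] at hεN
    calc a = ε / β * ((p:ℝ)+1) := hadef
    _ ≤ (4*M)⁻¹ / β * ((p:ℝ)+1) := by gcongr
    _ = ((p:ℝ)+1)/β * (4*M)⁻¹ := by ring
  have hq4 : (4*m) / 4 = m := by omega
  have hq3 : 3 * (4*m) / 4 = 3*m := by omega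
  have hgraded : ∀ k : ℕ, gradedNode p (4*m) β ε k = a * phiFun c ((k:ℝ)/(4*M)) := by
    intro k
    rw [gradedNode, hNcast, ← hcdef, ← hadef]
  have hcastm1 : ((m-1:ℕ):ℝ) = M - 1 := by
    rw [hMdef]; push_cast [Nat.cast_sub (by omega : 1 ≤ m)]; ring
  set X : ℝ := a * phiFun c ((M-1)/(4*M)) with hXdef
  have hgX : gradedNode p (4*m) β ε ((4*m)/4 - 1) = X := by
    rw [hq4, hgraded, hcastm1, hXdef]
  set h : ℝ := (1 - 2*X) / (2*M + 2) with hhdef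
  have hL : ∀ j : ℕ, j ≤ m - 1 → expNode p (4*m) β ε j = a * phiFun c ((j:ℝ)/(4*M)) := by
    intro j hj
    rw [expNode, if_pos (by omega : j ≤ (4*m)/4 - 1), hgraded]
  have hMid : ∀ j : ℕ, m ≤ j → j ≤ 3*m →
      expNode p (4*m) β ε j = X + h * ((j:ℝ) - (M - 1)) := by
    intro j h1 h2
    rw [expNode, if_neg (by omega : ¬ j ≤ (4*m)/4 - 1), if_pos (by omega : j ≤ 3*(4*m)/4),
      hgX, hNcast, hhdef]
    ring_nf
  have hR : ∀ j : ℕ, 3*m + 1 ≤ j →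
      expNode p (4*m) β ε j = 1 - a * phiFun c (((4*m - j:ℕ):ℝ)/(4*M)) := by
    intro j h1
    rw [expNode, if_neg (by omega : ¬ j ≤ (4*m)/4 - 1), if_neg (by omega : ¬ j ≤ 3*(4*m)/4),
      hNcast, ← hcdef, ← hadef]
  -- bounds on X
  have hsM0 : 0 < Real.sqrt M := Real.sqrt_pos.mpr hM0
  have hsM1 : 1 ≤ Real.sqrt M := by
    rw [show (1:ℝ) = Real.sqrt 1 from (Real.sqrt_one).symm]
    exact Real.sqrt_le_sqrt hM1
  have hMsq : Real.sqrt M * Real.sqrt M = M := Real.mul_self_sqrt hM0.le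
  set w : ℝ := 1 - c + c/M with hwdef
  have hwe : phiFun c ((M-1)/(4*M)) = -Real.log w := by
    simp only [phiFun, hwdef]
    congr 2
    field_simp
    ring
  have hw1 : w ≤ 1 := by
    have : c/M ≤ c := div_le_self hc0.le hM1
    rw [hwdef]; linarith
  have hcMlb : c₀/M ≤ c/M := by gcongr
  have hwl : c₀/M ≤ w := by
    have h1 : c/M ≤ w := by rw [hwdef]; linarith
    linarith
  have hw0 : 0 < w := lt_of_lt_of_le (by positivity) hwl
  have hlogw0 : Real.log w ≤ 0 := Real.log_nonpos hw0.le hw1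
  have hlogwl : Real.log (c₀/M) ≤ Real.log w := Real.log_le_log (by positivity) hwl
  have hlogdiv : Real.log (c₀/M) = Real.log c₀ - Real.log M := Real.log_div hc₀0.ne' hM0.ne'
  have hlogM : Real.log M ≤ 2 * Real.sqrt M := by
    have h1 : Real.log (Real.sqrt M) = Real.log M / 2 := Real.log_sqrt hM0.le
    have h2 : Real.log (Real.sqrt M) ≤ Real.sqrt M - 1 := Real.log_le_sub_one_of_pos hsM0
    linarith
  have hphiub : -Real.log w ≤ (2 + L) * Real.sqrt M := by
    have h1 : -Real.log w ≤ Real.log M + L := by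
      rw [hLdef]; linarith
    have h2 : L * 1 ≤ L * Real.sqrt M := mul_le_mul_of_nonneg_left hsM1 hL0.le
    have h3 : (2+L) * Real.sqrt M = 2*Real.sqrt M + L*Real.sqrt M := by ring
    linarith
  have hphi0 : 0 ≤ phiFun c ((M-1)/(4*M)) := by rw [hwe]; linarith
  have hX0 : 0 ≤ X := by rw [hXdef]; exact mul_nonneg ha0.le hphi0
  have hMK : 16*K^2 ≤ M := by
    have h1 : (⌈16*K^2⌉₊ + 1 : ℕ) ≤ m := by omega
    have h2 : ((⌈16*K^2⌉₊ : ℕ) : ℝ) ≤ M := by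
      rw [hMdef]; exact_mod_cast Nat.le_of_succ_le h1
    exact (Nat.le_ceil _).trans h2
  have h4K : 4*K ≤ Real.sqrt M := by
    rw [show (4*K) = Real.sqrt ((4*K)^2) from (Real.sqrt_sq (by positivity)).symm]
    apply Real.sqrt_le_sqrt
    calc (4*K)^2 = 16*K^2 := by ring
    _ ≤ M := hMK
  have hX4 : X ≤ 1/4 := by
    have c1 : X ≤ a * ((2+L) * Real.sqrt M) := by
      rw [hXdef, hwe]
      exact mul_le_mul_of_nonneg_left hphiub ha0.le
    have c2 : a * ((2+L) * Real.sqrt M) ≤ (((p:ℝ)+1)/β * (4*M)⁻¹) * ((2+L) * Real.sqrt M) :=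
      mul_le_mul_of_nonneg_right haU (by positivity)
    have c3 : (((p:ℝ)+1)/β * (4*M)⁻¹) * ((2+L) * Real.sqrt M) = K * Real.sqrt M / M := by
      rw [hKdef]
      field_simp
    have c3' : K * Real.sqrt M / M = K / Real.sqrt M := by
      rw [← hMsq]
      field_simp
      rw [Real.sqrt_sq hsM0.le]
    have c4 : K / Real.sqrt M ≤ K / (4*K) := by gcongr
    have c5 : K / (4*K) = 1/4 := by
      rw [div_eq_div_iff (by linarith) (by norm_num)]
      ring
    calc X ≤ a * ((2+L) * Real.sqrt M) := c1
    _ ≤ (((p:ℝ)+1)/β * (4*M)⁻¹) * ((2+L) * Real.sqrt M) := c2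
    _ = K * Real.sqrt M / M := c3
    _ = K / Real.sqrt M := c3'
    _ ≤ K / (4*K) := c4
    _ = 1/4 := c5
  have hh0 : 0 < h := by
    rw [hhdef]
    apply div_pos (by linarith) (by linarith)
  have hhub : h ≤ 2 * (4*M)⁻¹ := by
    have e : 2*(4*M)⁻¹ = 1/(2*M) := by field_simp; ring
    calc h = (1 - 2*X)/(2*M+2) := hhdef
    _ ≤ 1/(2*M+2) := by gcongr <;> linarith
    _ ≤ 1/(2*M) := by apply one_div_le_one_div_of_le (by linarith) (by linarith)
    _ = 2*(4*M)⁻¹ := e.symm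
  clear_value X h
  -- graded steps
  have hstep : ∀ k : ℕ, k + 1 ≤ m - 1 →
      0 < a * phiFun c (((k+1 : ℕ):ℝ)/(4*M)) - a * phiFun c ((k:ℝ)/(4*M)) ∧
      a * phiFun c (((k+1 : ℕ):ℝ)/(4*M)) - a * phiFun c ((k:ℝ)/(4*M)) ≤
        ((p:ℝ)+1)/β * (4*M)⁻¹ := by
    intro k hk
    have hkR : (k:ℝ) + 1 ≤ M - 1 := by
      have h1 : (k:ℕ) + 2 ≤ m := by omega
      have h2 : ((k:ℝ)) + 2 ≤ M := by rw [hMdef]; exact_mod_cast h1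
      linarith
    obtain ⟨s1, s2⟩ := phi_step c M (k:ℝ) hc0 hc1.le hM1 (Nat.cast_nonneg k) hkR
    push_cast
    constructor
    · rw [← mul_sub]
      exact mul_pos ha0 s1
    · rw [← mul_sub]
      calc a * (phiFun c (((k:ℝ)+1)/(4*M)) - phiFun c ((k:ℝ)/(4*M))) ≤ a * 1 :=
        mul_le_mul_of_nonneg_left s2 ha0.le
      _ = a := mul_one a
      _ ≤ ((p:ℝ)+1)/β * (4*M)⁻¹ := haU
  have hpβ : 0 ≤ ((p:ℝ)+1)/β := div_nonneg hp1.le hβ.le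
  have hinv0 : (0:ℝ) < (4*M)⁻¹ := by positivity
  have hCa : ((p:ℝ)+1)/β * (4*M)⁻¹ ≤ (((p:ℝ)+1)/β + 2) * (4*M)⁻¹ :=
    mul_le_mul_of_nonneg_right (by linarith) hinv0.le
  have hC2 : 2 * (4*M)⁻¹ ≤ (((p:ℝ)+1)/β + 2) * (4*M)⁻¹ :=
    mul_le_mul_of_nonneg_right (by linarith) hinv0.le
  have key : ∀ j, j < 4*m →
      0 < expNode p (4*m) β ε (j+1) - expNode p (4*m) β ε j ∧
      expNode p (4*m) β ε (j+1) - expNode p (4*m) β ε j ≤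
        (((p:ℝ)+1)/β + 2) * (4*M)⁻¹ := by
    intro j hj
    by_cases hb1 : j + 1 ≤ m - 1
    · rw [hL j (by omega), hL (j+1) (by omega)]
      obtain ⟨s1, s2⟩ := hstep j hb1
      exact ⟨s1, s2.trans hCa⟩
    by_cases hb2 : j ≤ m - 1
    · -- j = m - 1
      have hjm : j = m - 1 := by omega
      rw [hL j hb2, hMid (j+1) (by omega) (by omega), hjm, hcastm1,
        (by omega : m - 1 + 1 = m), ← hMdef, ← hXdef]
      have e2 : X + h * (M - (M-1)) - X = h := by ring
      rw [e2]
      exact ⟨hh0, hhub.trans hC2⟩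
    by_cases hb3 : j + 1 ≤ 3*m
    · rw [hMid j (by omega) (by omega), hMid (j+1) (by omega) hb3]
      push_cast
      have e2 : X + h * ((j:ℝ) + 1 - (M-1)) - (X + h * ((j:ℝ) - (M-1))) = h := by ring
      rw [e2]
      exact ⟨hh0, hhub.trans hC2⟩
    by_cases hb4 : j ≤ 3*m
    · -- j = 3m
      have hj3 : j = 3*m := by omega
      have hj3R : (j:ℝ) = 3*M := by rw [hj3, hMdef]; push_cast; ring
      have hsub : 4*m - (j+1) = m - 1 := by omega
      rw [hMid j (by omega) hb4, hR (j+1) (by omega), hsub, hcastm1, ← hXdef, hj3R]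
      have hkey : h * (2*M+2) = 1 - 2*X := by
        rw [hhdef]
        field_simp
      have e2 : 1 - X - (X + h * (3*M - (M-1))) = h := by linear_combination -hkey
      rw [e2]
      exact ⟨hh0, hhub.trans hC2⟩
    · -- right graded part
      have hsub : 4*m - j = (4*m - (j+1)) + 1 := by omega
      rw [hR j (by omega), hR (j+1) (by omega), hsub]
      obtain ⟨s1, s2⟩ := hstep (4*m - (j+1)) (by omega)
      constructor
      · linarith
      · refine le_trans ?_ hCa
        linarith
  refine ⟨⟨?_, ?_, ?_⟩, ?_⟩
  · rw [hL 0 (by omega)]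
    simp [phiFun]
  · intro j hj
    have := (key j hj).1
    linarith
  · rw [hR (4*m) (by omega)]
    simp [phiFun]
  · intro j h1 h2
    have hj : j - 1 < 4*m := by omega
    have hk := (key (j-1) hj).2
    rw [(by omega : j - 1 + 1 = j)] at hk
    rw [hNcast]
    exact hk
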